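/- Define rational numbers C_p recursively by C_0 = 1 and Σ_{q=0}^p C_{p−q}/(2q+1)! = 0 for p ≥ 1. Then for all p ≥ 0, Σ_{q=0}^p 2^{2q}·C_{p−q}/(2q+1)! = 1/(2p)!. -/

import Mathlib

open Finset

lemma sum_range_two_mul_aux (n : ℕ) (f : ℕ → ℕ) :
    ∑ i ∈ range (2 * n), f i = ∑ b ∈ range n, (f (2 * b) + f (2 * b + 1)) := by
  induction n with
  | zero => simp
  | succ n ih =>
    rw [Nat.mul_succ, sum_range_succ, sum_range_succ, sum_range_succ, ih]
    ring

lemma even_choose_sum (q : ℕ) :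
    ∑ b ∈ range (q + 1), (2 * q + 1).choose (2 * b) = 2 ^ (2 * q) := by
  have hrefl : ∑ b ∈ range (q + 1), (2 * q + 1).choose (2 * b)
      = ∑ b ∈ range (q + 1), (2 * q + 1).choose (2 * b + 1) := by
    rw [← Finset.sum_range_reflect]
    refine Finset.sum_congr rfl fun b hb => ?_
    rw [mem_range, Nat.lt_succ_iff] at hb
    have h1 : 2 * (q + 1 - 1 - b) = 2 * q + 1 - (2 * b + 1) := by omega
    rw [h1, Nat.choose_symm (by omega)]
  have htot : ∑ i ∈ range (2 * (q + 1)), (2 * q + 1).choose i = 2 ^ (2 * q + 1) := by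
    have := Nat.sum_range_choose (2 * q + 1)
    rwa [show 2 * (q + 1) = 2 * q + 1 + 1 by ring]
  rw [sum_range_two_mul_aux, Finset.sum_add_distrib, ← hrefl] at htot
  have hp : 2 ^ (2 * q + 1) = 2 * 2 ^ (2 * q) := by rw [pow_succ]; ring
  omega

lemma pow_div_factorial (q : ℕ) :
    (2:ℚ) ^ (2 * q) / (Nat.factorial (2 * q + 1) : ℚ) =
      ∑ b ∈ range (q + 1),
        1 / ((Nat.factorial (2 * (q - b) + 1) : ℚ) * (Nat.factorial (2 * b) : ℚ)) := by
  have hterm : ∀ b ∈ range (q + 1),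
      1 / ((Nat.factorial (2 * (q - b) + 1) : ℚ) * (Nat.factorial (2 * b) : ℚ))
        = ((2 * q + 1).choose (2 * b) : ℚ) / (Nat.factorial (2 * q + 1) : ℚ) := by
    intro b hb
    rw [mem_range, Nat.lt_succ_iff] at hb
    have hle : 2 * b ≤ 2 * q + 1 := by omega
    have hnat := Nat.choose_mul_factorial_mul_factorial hle
    rw [show 2 * q + 1 - 2 * b = 2 * (q - b) + 1 by omega] at hnat
    have h1 : (Nat.factorial (2 * (q - b) + 1) : ℚ) ≠ 0 := by
      exact_mod_cast Nat.factorial_ne_zero _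
    have h2 : (Nat.factorial (2 * b) : ℚ) ≠ 0 := by
      exact_mod_cast Nat.factorial_ne_zero _
    have h3 : (Nat.factorial (2 * q + 1) : ℚ) ≠ 0 := by
      exact_mod_cast Nat.factorial_ne_zero _
    field_simp
    have hnat' : Nat.factorial (2 * q + 1)
        = (2 * q + 1).choose (2 * b) * ((2 * (q - b) + 1).factorial * (2 * b).factorial) := by
      rw [← hnat]; ring
    exact_mod_cast hnat'.trans (by ring)
  rw [Finset.sum_congr rfl hterm, ← Finset.sum_div]
  congr 1
  rw [← Nat.cast_sum, even_choose_sum]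
  push_cast
  ring

theorem C_recursion_b (C : ℕ → ℚ) (hC0 : C 0 = 1)
    (hCrec : ∀ p : ℕ, 1 ≤ p → ∑ q ∈ Finset.range (p + 1), C (p - q) / (Nat.factorial (2 * q + 1) : ℚ) = 0) (p : ℕ) :
    ∑ q ∈ Finset.range (p + 1), 2 ^ (2 * q) * C (p - q) / (Nat.factorial (2 * q + 1) : ℚ) =
      1 / (Nat.factorial (2 * p) : ℚ) := by
  have step1 : ∀ q ∈ range (p + 1),
      2 ^ (2 * q) * C (p - q) / (Nat.factorial (2 * q + 1) : ℚ)
        = ∑ b ∈ range (q + 1),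
            C (p - q) / ((Nat.factorial (2 * (q - b) + 1) : ℚ) * (Nat.factorial (2 * b) : ℚ)) := by
    intro q _
    have := pow_div_factorial q
    calc 2 ^ (2 * q) * C (p - q) / (Nat.factorial (2 * q + 1) : ℚ)
        = C (p - q) * ((2:ℚ) ^ (2 * q) / (Nat.factorial (2 * q + 1) : ℚ)) := by ring
      _ = C (p - q) * ∑ b ∈ range (q + 1),
            1 / ((Nat.factorial (2 * (q - b) + 1) : ℚ) * (Nat.factorial (2 * b) : ℚ)) := by rw [this]
      _ = _ := by rw [Finset.mul_sum]; exact Finset.sum_congr rfl fun b _ => by ring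
  rw [Finset.sum_congr rfl step1]
  have swap :
      ∑ q ∈ range (p + 1), ∑ b ∈ range (q + 1),
          C (p - q) / ((Nat.factorial (2 * (q - b) + 1) : ℚ) * (Nat.factorial (2 * b) : ℚ))
        = ∑ b ∈ range (p + 1), ∑ q ∈ Finset.Ico b (p + 1),
            C (p - q) / ((Nat.factorial (2 * (q - b) + 1) : ℚ) * (Nat.factorial (2 * b) : ℚ)) := by
    simp_rw [← Nat.Ico_zero_eq_range]; rw [← Finset.sum_Ico_Ico_comm]
  rw [swap]
  have inner : ∀ b ∈ range (p + 1),
      ∑ q ∈ Finset.Ico b (p + 1),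
          C (p - q) / ((Nat.factorial (2 * (q - b) + 1) : ℚ) * (Nat.factorial (2 * b) : ℚ))
        = (∑ a ∈ range (p - b + 1), C (p - b - a) / (Nat.factorial (2 * a + 1) : ℚ))
            / (Nat.factorial (2 * b) : ℚ) := by
    intro b hb
    rw [mem_range, Nat.lt_succ_iff] at hb
    rw [Finset.sum_Ico_eq_sum_range, show p + 1 - b = p - b + 1 by omega, Finset.sum_div]
    refine Finset.sum_congr rfl fun a ha => ?_
    rw [mem_range, Nat.lt_succ_iff] at ha
    rw [show b + a - b = a by omega, show p - (b + a) = p - b - a by omega, div_div]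
  rw [Finset.sum_congr rfl inner]
  rw [Finset.sum_eq_single_of_mem p (self_mem_range_succ p)]
  · simp [hC0, Nat.factorial]
  · intro b hb hbne
    rw [mem_range, Nat.lt_succ_iff] at hb
    rw [hCrec (p - b) (by omega), zero_div]
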